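/- Let r1, r2, d ∈ ℂ satisfy: k = r1 + r2 + 2d + 2 is an even integer with k ≥ 6, Re(r2) > Re(r1) + 1 > 1 and Re(d) > 0, and let 0 < ε < 1/2. Then there exists a constant C > 0 such that |J_{k−1}(x)| ≤ C·x^{Re(r2 − r1) − 1 − ε} for all real x > 0. -/

import Mathlib

open Real

noncomputable section

/-- Bessel function of the first kind of integer order `m`:
`J_m(x) = Σ_{j=0}^∞ (−1)^j/(j!·(j+m)!)·(x/2)^{2j+m}`. -/
def besselJ (m : ℕ) (x : ℝ) : ℝ :=
  ∑' j : ℕ, (-1 : ℝ) ^ j / ((j.factorial : ℝ) * ((j + m).factorial : ℝ)) * (x / 2) ^ (2 * j + m)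

namespace BesselAux

def c (m j : ℕ) : ℝ := (-1 : ℝ) ^ j / ((j.factorial : ℝ) * ((j + m).factorial : ℝ))

def f (m j : ℕ) (x : ℝ) : ℝ := c m j * (x / 2) ^ (2 * j + m)

def f1 (m j : ℕ) (x : ℝ) : ℝ := c m j * (2 * j + m : ℕ) * (x / 2) ^ (2 * j + m - 1) / 2

def f2 (m j : ℕ) (x : ℝ) : ℝ :=
  c m j * ((2 * j + m) * (2 * j + m - 1) : ℕ) * (x / 2) ^ (2 * j + m - 2) / 4

def J (m : ℕ) (x : ℝ) : ℝ := ∑' j, f m j x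
def J1 (m : ℕ) (x : ℝ) : ℝ := ∑' j, f1 m j x
def J2 (m : ℕ) (x : ℝ) : ℝ := ∑' j, f2 m j x

lemma besselJ_eq (m : ℕ) (x : ℝ) : besselJ m x = J m x := rfl

lemma abs_c_le (m j : ℕ) : |c m j| ≤ 1 / j.factorial := by
  have h1 : (0:ℝ) < j.factorial := by positivity
  have h2 : (1:ℝ) ≤ (j + m).factorial := by
    exact_mod_cast Nat.one_le_iff_ne_zero.2 (Nat.factorial_ne_zero _)
  rw [c, abs_div, abs_pow, abs_neg, abs_one, one_pow]
  rw [abs_of_pos (by positivity)]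
  rw [div_le_div_iff₀ (by positivity) h1]
  nlinarith

lemma summable_aux (m : ℕ) (b : ℝ) : Summable (fun j : ℕ => b ^ (2 * j + m) / j.factorial) := by
  have := (Real.summable_pow_div_factorial (b ^ 2)).mul_left (b ^ m)
  refine this.congr fun j => ?_
  rw [pow_add, mul_comm 2 j, pow_mul]
  ring

lemma bound_f (m j : ℕ) {x R : ℝ} (hx : |x| ≤ R) (hR : 1 ≤ R) :
    |f m j x| ≤ R ^ (2 * j + m) / j.factorial := by
  have hxR : |x / 2| ≤ R := by rw [abs_div]; simp only [abs_two]; linarith [abs_nonneg x]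
  have h1 : |(x / 2) ^ (2 * j + m)| ≤ R ^ (2 * j + m) := by
    rw [abs_pow]; exact pow_le_pow_left₀ (abs_nonneg _) hxR _
  have h2 := abs_c_le m j
  rw [f, abs_mul]
  calc |c m j| * |(x / 2) ^ (2 * j + m)| ≤ (1 / j.factorial) * R ^ (2 * j + m) := by
        apply mul_le_mul h2 h1 (abs_nonneg _) (by positivity)
    _ = R ^ (2 * j + m) / j.factorial := by ring

lemma bound_f1 (m j : ℕ) {x R : ℝ} (hx : |x| ≤ R) (hR : 1 ≤ R) :
    |f1 m j x| ≤ (2 * R) ^ (2 * j + m) / j.factorial := by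
  have hR0 : (0:ℝ) < R := lt_of_lt_of_le one_pos hR
  have hxR : |x / 2| ≤ R := by rw [abs_div]; simp only [abs_two]; linarith [abs_nonneg x]
  set n := 2 * j + m with hn
  have h1 : |(x / 2) ^ (n - 1)| ≤ R ^ (n - 1) := by
    rw [abs_pow]; exact pow_le_pow_left₀ (abs_nonneg _) hxR _
  have h2 := abs_c_le m j
  have h3 : R ^ (n - 1) ≤ R ^ n := pow_le_pow_right₀ hR (Nat.sub_le _ _)
  have h4 : |((n : ℕ) : ℝ)| ≤ 2 ^ n := by
    rw [abs_of_nonneg (Nat.cast_nonneg _)]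
    exact_mod_cast (Nat.lt_two_pow_self).le
  have hfac : (0:ℝ) < j.factorial := by positivity
  rw [f1, abs_div, abs_mul, abs_mul, abs_two]
  calc |c m j| * |((n:ℕ):ℝ)| * |(x / 2) ^ (n - 1)| / 2
      ≤ (1 / j.factorial) * 2 ^ n * R ^ (n-1) / 2 := by
        gcongr
    _ = 2 ^ n * R ^ (n-1) / (j.factorial * 2) := by ring
    _ ≤ 2 ^ n * R ^ n / (j.factorial * 1) := by
        gcongr <;> first | positivity | linarith
    _ = (2 * R) ^ n / j.factorial := by rw [mul_pow]; ring

lemma bound_f2 (m j : ℕ) {x R : ℝ} (hx : |x| ≤ R) (hR : 1 ≤ R) :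
    |f2 m j x| ≤ (4 * R) ^ (2 * j + m) / j.factorial := by
  have hR0 : (0:ℝ) < R := lt_of_lt_of_le one_pos hR
  have hxR : |x / 2| ≤ R := by rw [abs_div]; simp only [abs_two]; linarith [abs_nonneg x]
  set n := 2 * j + m with hn
  have h1 : |(x / 2) ^ (n - 2)| ≤ R ^ (n - 2) := by
    rw [abs_pow]; exact pow_le_pow_left₀ (abs_nonneg _) hxR _
  have h2 := abs_c_le m j
  have h3 : R ^ (n - 2) ≤ R ^ n := pow_le_pow_right₀ hR (Nat.sub_le _ _)
  have h4 : |((n * (n-1) : ℕ) : ℝ)| ≤ 4 ^ n := by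
    rw [abs_of_nonneg (Nat.cast_nonneg _)]
    have : (n * (n - 1) : ℕ) ≤ 4 ^ n := by
      calc n * (n - 1) ≤ n * n := Nat.mul_le_mul_left n (Nat.sub_le _ _)
        _ ≤ 2 ^ n * 2 ^ n := Nat.mul_le_mul (Nat.lt_two_pow_self).le (Nat.lt_two_pow_self).le
        _ = 4 ^ n := by rw [← Nat.mul_pow]
    exact_mod_cast this
  have hfac : (0:ℝ) < j.factorial := by positivity
  rw [f2, abs_div, abs_mul, abs_mul]
  have habs4 : |(4:ℝ)| = 4 := by norm_num
  rw [habs4]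
  calc |c m j| * |((n * (n-1) : ℕ):ℝ)| * |(x / 2) ^ (n - 2)| / 4
      ≤ (1 / j.factorial) * 4 ^ n * R ^ (n-2) / 4 := by
        gcongr
    _ = 4 ^ n * R ^ (n-2) / (j.factorial * 4) := by ring
    _ ≤ 4 ^ n * R ^ n / (j.factorial * 1) := by
        gcongr <;> first | positivity | linarith
    _ = (4 * R) ^ n / j.factorial := by rw [mul_pow]; ring

lemma summable_f (m : ℕ) (x : ℝ) : Summable (fun j => f m j x) := by
  have hR : (1:ℝ) ≤ |x| + 1 := by linarith [abs_nonneg x]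
  exact (summable_aux m (|x|+1)).of_norm_bounded
    (fun j => bound_f m j (by linarith) hR)

lemma summable_f1 (m : ℕ) (x : ℝ) : Summable (fun j => f1 m j x) := by
  have hR : (1:ℝ) ≤ |x| + 1 := by linarith [abs_nonneg x]
  exact (summable_aux m (2*(|x|+1))).of_norm_bounded
    (fun j => bound_f1 m j (by linarith) hR)

lemma summable_f2 (m : ℕ) (x : ℝ) : Summable (fun j => f2 m j x) := by
  have hR : (1:ℝ) ≤ |x| + 1 := by linarith [abs_nonneg x]
  exact (summable_aux m (4*(|x|+1))).of_norm_bounded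
    (fun j => bound_f2 m j (by linarith) hR)

lemma hasDerivAt_f (m j : ℕ) (x : ℝ) : HasDerivAt (f m j) (f1 m j x) x := by
  have h : HasDerivAt (fun y : ℝ => (y / 2) ^ (2 * j + m))
      ((2 * j + m : ℕ) * (x / 2) ^ (2 * j + m - 1) * (1/2)) x := by
    simpa using ((hasDerivAt_id x).div_const 2).fun_pow (2 * j + m)
  have := h.const_mul (c m j)
  refine this.congr_deriv ?_
  rw [f1]; ring

lemma hasDerivAt_f1 (m j : ℕ) (hm : 2 ≤ m) (x : ℝ) : HasDerivAt (f1 m j) (f2 m j x) x := by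
  have hfun : f1 m j = fun y : ℝ => (c m j * (2 * j + m : ℕ) / 2) * (y / 2) ^ (2 * j + m - 1) := by
    funext y; rw [f1]; ring
  have h : HasDerivAt (fun y : ℝ => (y / 2) ^ (2 * j + m - 1))
      ((2 * j + m - 1 : ℕ) * (x / 2) ^ (2 * j + m - 1 - 1) * (1/2)) x := by
    simpa using ((hasDerivAt_id x).div_const 2).fun_pow (2 * j + m - 1)
  have h2 := h.const_mul (c m j * (2 * j + m : ℕ) / 2)
  rw [hfun]
  refine h2.congr_deriv ?_
  rw [f2]
  have e1 : 2 * j + m - 1 - 1 = 2 * j + m - 2 := by omega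
  rw [e1, Nat.cast_mul]
  ring

lemma hasDerivAt_J (m : ℕ) (x : ℝ) : HasDerivAt (J m) (J1 m x) x := by
  set R : ℝ := |x| + 2 with hR
  have hR1 : (1:ℝ) ≤ R := by have := abs_nonneg x; simp [hR]; linarith
  have hR0 : (0:ℝ) < R := by linarith
  apply hasDerivAt_tsum_of_isPreconnected (summable_aux m (2 * R))
    (Metric.isOpen_ball (x := (0:ℝ)) (ε := R))
    ((convex_ball (0:ℝ) R).isPreconnected)
    (fun j y _ => hasDerivAt_f m j y)
    ?_ (Metric.mem_ball_self hR0) (summable_f m 0) ?_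
  · intro j y hy
    have : |y| ≤ R := by
      have := Metric.mem_ball.mp hy
      rw [dist_zero_right, Real.norm_eq_abs] at this
      linarith
    exact bound_f1 m j this hR1
  · rw [Metric.mem_ball, dist_zero_right, Real.norm_eq_abs]
    linarith

lemma hasDerivAt_J1 (m : ℕ) (hm : 2 ≤ m) (x : ℝ) : HasDerivAt (J1 m) (J2 m x) x := by
  set R : ℝ := |x| + 2 with hR
  have hR1 : (1:ℝ) ≤ R := by have := abs_nonneg x; simp [hR]; linarith
  have hR0 : (0:ℝ) < R := by linarith
  apply hasDerivAt_tsum_of_isPreconnected (summable_aux m (4 * R))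
    (Metric.isOpen_ball (x := (0:ℝ)) (ε := R))
    ((convex_ball (0:ℝ) R).isPreconnected)
    (fun j y _ => hasDerivAt_f1 m j hm y)
    ?_ (Metric.mem_ball_self hR0) (summable_f1 m 0) ?_
  · intro j y hy
    have : |y| ≤ R := by
      have := Metric.mem_ball.mp hy
      rw [dist_zero_right, Real.norm_eq_abs] at this
      linarith
    exact bound_f2 m j this hR1
  · rw [Metric.mem_ball, dist_zero_right, Real.norm_eq_abs]
    linarith

lemma c_succ (m j : ℕ) : c m (j+1) * ((j+1) * (j+1+m)) = - c m j := by
  have h1 : ((j+1).factorial : ℝ) = (j+1) * j.factorial := by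
    rw [Nat.factorial_succ]; push_cast; ring
  have h2 : ((j+1+m).factorial : ℝ) = (j+1+m) * (j+m).factorial := by
    have : j+1+m = (j+m) + 1 := by omega
    rw [this, Nat.factorial_succ]; push_cast; ring
  have hj : ((j+1:ℕ) : ℝ) ≠ 0 := by positivity
  have hjm : ((j+1+m:ℕ) : ℝ) ≠ 0 := by positivity
  have hf1 : (j.factorial : ℝ) ≠ 0 := by positivity
  have hf2 : ((j+m).factorial : ℝ) ≠ 0 := by positivity
  rw [c, c, h1, h2, pow_succ]
  field_simp

lemma key (m : ℕ) (hm : 2 ≤ m) (j : ℕ) (x : ℝ) :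
    x^2 * f2 m j x + x * f1 m j x + (x^2 - (m:ℝ)^2) * f m j x
      = 4 * j * (j+m) * c m j * (x/2)^(2*j+m) + x^2 * f m j x := by
  obtain ⟨q, rfl⟩ : ∃ q, m = q + 2 := ⟨m - 2, by omega⟩
  have e1 : 2*j+(q+2) - 1 = 2*j+q+1 := by omega
  have e2 : 2*j+(q+2) - 2 = 2*j+q := by omega
  have e3 : 2*j+(q+2) = 2*j+q+2 := by omega
  set t := x / 2 with ht
  have hx : x = 2 * t := by rw [ht]; ring
  rw [f, f1, f2, e1, e2, e3, hx]
  push_cast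
  ring

lemma ode (m : ℕ) (hm : 2 ≤ m) (x : ℝ) :
    x^2 * J2 m x + x * J1 m x + (x^2 - (m:ℝ)^2) * J m x = 0 := by
  set T : ℕ → ℝ := fun j => x^2 * f2 m j x + x * f1 m j x + (x^2 - (m:ℝ)^2) * f m j x with hTdef
  have hsf := summable_f m x
  have hsf1 := summable_f1 m x
  have hsf2 := summable_f2 m x
  have hT : Summable T := by
    apply Summable.add
    apply Summable.add
    · exact hsf2.mul_left _
    · exact hsf1.mul_left _
    · exact hsf.mul_left _
  have hsum : x^2 * J2 m x + x * J1 m x + (x^2 - (m:ℝ)^2) * J m x = ∑' j, T j := by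
    rw [J, J1, J2, ← tsum_mul_left, ← tsum_mul_left, ← tsum_mul_left,
      ← Summable.tsum_add (hsf2.mul_left _) (hsf1.mul_left _),
      ← Summable.tsum_add ((hsf2.mul_left _).add (hsf1.mul_left _)) (hsf.mul_left _)]
  rw [hsum]
  set B : ℕ → ℝ := fun j => x^2 * f m j x with hBdef
  have hB : Summable B := hsf.mul_left _
  have hBs : Summable (fun j => B (j+1)) := (summable_nat_add_iff 1).2 hB
  have hT0 : T 0 = B 0 := by
    have := key m hm 0 x
    simp only [hTdef, hBdef]
    rw [this]
    norm_num
  have hTs : ∀ j, T (j+1) = B (j+1) - B j := by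
    intro j
    have hk := key m hm (j+1) x
    have hc := c_succ m j
    simp only [hTdef, hBdef]
    rw [hk]
    have h4 : (4:ℝ) * (j+1) * ((j+1)+m) * c m (j+1) * (x/2)^(2*(j+1)+m)
        = - (4 * c m j * (x/2)^(2*j+m+2)) := by
      have e : 2*(j+1)+m = 2*j+m+2 := by omega
      rw [e]
      have : (4:ℝ) * (j+1) * ((j+1)+m) * c m (j+1)
          = 4 * (c m (j+1) * ((j+1) * (j+1+m))) := by push_cast; ring
      rw [this, hc]; ring
    push_cast
    push_cast at h4
    rw [h4]
    have e5 : x^2 * f m j x = 4 * c m j * (x/2)^(2*j+m+2) := by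
      rw [f, pow_add]; ring
    rw [e5, f]
    ring
  have htel : ∑' j, T j = 0 := by
    rw [Summable.tsum_eq_zero_add hT]
    have h1 : ∑' j, T (j+1) = ∑' j, (B (j+1) - B j) := by
      exact tsum_congr fun j => hTs j
    rw [h1, Summable.tsum_sub hBs hB, hT0]
    have h2 := Summable.tsum_eq_zero_add hB
    linarith [h2]
  exact htel

lemma large (m : ℕ) (hm : 2 ≤ m) : ∃ M > (0:ℝ), ∀ x : ℝ, 1 ≤ x →
    |J m x| ≤ M / Real.sqrt x := by
  set K : ℝ := (m:ℝ)^2 - 1/4 with hK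
  have hK0 : 0 < K := by
    have : (2:ℝ) ≤ (m:ℝ) := by exact_mod_cast hm
    rw [hK]; nlinarith
  set P : ℝ → ℝ := fun y => J m y / (2 * Real.sqrt y) + Real.sqrt y * J1 m y with hPdef
  set E : ℝ → ℝ := fun y => (P y)^2 + (Real.sqrt y * J m y)^2 with hEdef
  set F : ℝ → ℝ := fun y => E y * Real.exp (K / y) with hFdef
  have main : ∀ x : ℝ, 0 < x → HasDerivAt F
      ((2 * P x * (J1 m x / Real.sqrt x + Real.sqrt x * J2 m x - J m x / (4 * x * Real.sqrt x))
        + 2 * (Real.sqrt x * J m x) * P x) * Real.exp (K / x)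
        + E x * (Real.exp (K / x) * (K * -(x^2)⁻¹))) x := by
    intro x hx
    have hs0 : Real.sqrt x ≠ 0 := by positivity
    have hsq : HasDerivAt Real.sqrt (1/(2*Real.sqrt x)) x := Real.hasDerivAt_sqrt hx.ne'
    have hu : HasDerivAt (fun y => Real.sqrt y * J m y) (P x) x := by
      have := hsq.fun_mul (hasDerivAt_J m x)
      refine this.congr_deriv ?_
      rw [hPdef]; dsimp only; ring
    have hinv : HasDerivAt (fun y => (2 * Real.sqrt y)⁻¹) (-(1/(4 * x * Real.sqrt x))) x := by
      have h2s : HasDerivAt (fun y => 2 * Real.sqrt y) (2 * (1/(2*Real.sqrt x))) x :=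
        hsq.const_mul 2
      have := h2s.fun_inv (by positivity)
      refine this.congr_deriv ?_
      have hsx : Real.sqrt x * Real.sqrt x = x := Real.mul_self_sqrt hx.le
      field_simp
      linear_combination 4 * hsx
    have hP : HasDerivAt P
        (J1 m x / Real.sqrt x + Real.sqrt x * J2 m x - J m x / (4 * x * Real.sqrt x)) x := by
      have hPalt : P = fun y => J m y * (2 * Real.sqrt y)⁻¹ + Real.sqrt y * J1 m y := by
        funext y; rw [hPdef]; dsimp only; rw [div_eq_mul_inv]
      have h1 := (hasDerivAt_J m x).fun_mul hinv
      have h2 := hsq.fun_mul (hasDerivAt_J1 m hm x)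
      rw [hPalt]
      have := h1.fun_add h2
      refine this.congr_deriv ?_
      field_simp
      ring
    have hE : HasDerivAt E
        (2 * P x * (J1 m x / Real.sqrt x + Real.sqrt x * J2 m x - J m x / (4 * x * Real.sqrt x))
          + 2 * (Real.sqrt x * J m x) * P x) x := by
      have h1 := hP.fun_pow 2
      have h2 := hu.fun_pow 2
      have := h1.fun_add h2
      refine this.congr_deriv ?_
      push_cast
      ring
    have hexp : HasDerivAt (fun y : ℝ => Real.exp (K / y)) (Real.exp (K / x) * (K * -(x^2)⁻¹)) x := by
      have hid : HasDerivAt (fun y : ℝ => K / y) (K * -(x^2)⁻¹) x := by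
        simpa [div_eq_mul_inv] using ((hasDerivAt_id x).inv hx.ne').const_mul K
      exact hid.exp
    exact hE.mul hexp
  have hders : ∀ x : ℝ, 0 < x →
      (2 * P x * (J1 m x / Real.sqrt x + Real.sqrt x * J2 m x - J m x / (4 * x * Real.sqrt x))
        + 2 * (Real.sqrt x * J m x) * P x) * Real.exp (K / x)
        + E x * (Real.exp (K / x) * (K * -(x^2)⁻¹)) ≤ 0 := by
    intro x hx
    have hs0 : Real.sqrt x ≠ 0 := by positivity
    have hsx : Real.sqrt x * Real.sqrt x = x := Real.mul_self_sqrt hx.le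
    set u : ℝ := Real.sqrt x * J m x with hu
    have hQ : J1 m x / Real.sqrt x + Real.sqrt x * J2 m x - J m x / (4 * x * Real.sqrt x)
        = -u + (K / x^2) * u := by
      have hode := ode m hm x
      rw [hu, hK]
      field_simp
      linear_combination (4*x) * hode + (J m x + 4*x^2*J2 m x + 4*x^2*J m x - 4*(m:ℝ)^2*J m x) * hsx
    rw [hQ]
    have hEnn : 0 ≤ E x := by rw [hEdef]; positivity
    have hEe : E x = (P x)^2 + u^2 := by rw [hEdef]
    have h2ab : 2 * P x * u ≤ (P x)^2 + u^2 := by nlinarith [sq_nonneg (P x - u)]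
    have hexp0 : 0 < Real.exp (K / x) := Real.exp_pos _
    have hx2 : 0 < x^2 := by positivity
    have key : 2 * P x * (-u + (K / x^2) * u) + 2 * u * P x ≤ K / x^2 * E x := by
      have : 2 * P x * (-u + (K / x^2) * u) + 2 * u * P x = (K / x^2) * (2 * P x * u) := by ring
      rw [this, hEe]
      have hKx2 : 0 ≤ K / x^2 := by positivity
      nlinarith [mul_le_mul_of_nonneg_left h2ab hKx2]
    calc (2 * P x * (-u + (K / x^2) * u) + 2 * u * P x) * Real.exp (K / x)
        + E x * (Real.exp (K / x) * (K * -(x^2)⁻¹))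
        ≤ (K / x^2 * E x) * Real.exp (K / x) + E x * (Real.exp (K / x) * (K * -(x^2)⁻¹)) := by
          gcongr
      _ = 0 := by field_simp; ring
  have hanti : AntitoneOn F (Set.Ici 1) := by
    apply antitoneOn_of_deriv_nonpos (convex_Ici 1)
    · intro y hy
      have hy0 : (0:ℝ) < y := lt_of_lt_of_le one_pos hy
      exact ((main y hy0).differentiableAt).continuousAt.continuousWithinAt
    · intro y hy
      rw [interior_Ici] at hy
      have hy0 : (0:ℝ) < y := lt_trans one_pos hy
      exact ((main y hy0).differentiableAt).differentiableWithinAt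
    · intro y hy
      rw [interior_Ici] at hy
      have hy0 : (0:ℝ) < y := lt_trans one_pos hy
      rw [(main y hy0).deriv]
      exact hders y hy0
  refine ⟨Real.sqrt (F 1) + 1, by positivity, fun x hx => ?_⟩
  have hx0 : (0:ℝ) < x := lt_of_lt_of_le one_pos hx
  have hFx : F x ≤ F 1 := hanti (Set.mem_Ici.2 le_rfl) (Set.mem_Ici.2 hx) hx
  have hEF : E x ≤ F x := by
    rw [hFdef]
    dsimp only
    have h1 : 1 ≤ Real.exp (K / x) := by
      rw [← Real.exp_zero]
      apply Real.exp_le_exp.2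
      positivity
    have hEnn : 0 ≤ E x := by rw [hEdef]; positivity
    nlinarith
  have hu2 : (Real.sqrt x * J m x)^2 ≤ F 1 := by
    have : (Real.sqrt x * J m x)^2 ≤ E x := by
      rw [hEdef]; dsimp only; nlinarith [sq_nonneg (P x)]
    linarith
  have habs : |Real.sqrt x * J m x| ≤ Real.sqrt (F 1) + 1 := by
    have h := Real.sqrt_le_sqrt hu2
    rw [Real.sqrt_sq_eq_abs] at h
    linarith
  have hsx0 : 0 < Real.sqrt x := Real.sqrt_pos.2 hx0
  rw [le_div_iff₀ hsx0]
  calc |J m x| * Real.sqrt x = |Real.sqrt x * J m x| := by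
        rw [abs_mul, abs_of_pos hsx0]; ring
    _ ≤ Real.sqrt (F 1) + 1 := habs

lemma small (m : ℕ) : ∃ S > (0:ℝ), ∀ x : ℝ, 0 < x → x ≤ 1 → |J m x| ≤ S * x ^ m := by
  have hsum : Summable (fun j : ℕ => (1:ℝ) / j.factorial) := by
    simpa using Real.summable_pow_div_factorial 1
  refine ⟨∑' j : ℕ, (1:ℝ) / j.factorial, ?_, fun x hx hx1 => ?_⟩
  · have h0 : (1:ℝ) ≤ ∑' j : ℕ, (1:ℝ) / j.factorial := by
      have := Summable.le_tsum hsum 0 (fun j _ => by positivity)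
      simpa using this
    linarith
  · have hbound : ∀ j, |f m j x| ≤ (1 / j.factorial) * x ^ m := by
      intro j
      have h1 : |(x/2)^(2*j+m)| ≤ x ^ m := by
        rw [abs_pow, abs_of_pos (by positivity : (0:ℝ) < x/2)]
        calc (x/2)^(2*j+m) = (x/2)^(2*j) * (x/2)^m := by rw [pow_add]
          _ ≤ 1 * x ^ m := by
              apply mul_le_mul
              · exact pow_le_one₀ (by positivity) (by linarith)
              · exact pow_le_pow_left₀ (by positivity) (by linarith) m
              · positivity
              · norm_num
          _ = x ^ m := by ring
      rw [f, abs_mul]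
      exact mul_le_mul (abs_c_le m j) h1 (abs_nonneg _) (by positivity)
    have hsum2 : Summable (fun j : ℕ => (1 / (j.factorial:ℝ)) * x ^ m) :=
      hsum.mul_right _
    have habs : Summable (fun j => |f m j x|) :=
      hsum2.of_nonneg_of_le (fun j => abs_nonneg _) hbound
    calc |J m x| ≤ ∑' j, |f m j x| := by
          rw [J]
          have habs' : Summable fun j => ‖f m j x‖ := by
            simpa [Real.norm_eq_abs] using habs
          have h := norm_tsum_le_tsum_norm habs'
          simpa [Real.norm_eq_abs] using h
      _ ≤ ∑' j : ℕ, (1 / (j.factorial:ℝ)) * x ^ m := Summable.tsum_le_tsum hbound habs hsum2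
      _ = (∑' j : ℕ, (1:ℝ) / j.factorial) * x ^ m := tsum_mul_right

end BesselAux

/-- Power bound for the Bessel function `J_{k−1}`. -/
theorem besselJ_power_bound
    (k : ℕ) (hke : Even k) (hk6 : 6 ≤ k)
    (r1 r2 d : ℂ) (hsum : r1 + r2 + 2 * d + 2 = (k : ℂ))
    (h21 : r1.re + 1 < r2.re) (h11 : 1 < r1.re + 1) (hd : 0 < d.re)
    (ε : ℝ) (hε0 : 0 < ε) (hε : ε < 1 / 2) :
    ∃ C > (0 : ℝ), ∀ x : ℝ, 0 < x →
      |besselJ (k - 1) x| ≤ C * x ^ ((r2 - r1).re - 1 - ε) := by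
  set m : ℕ := k - 1 with hmdef
  have hm2 : 2 ≤ m := by omega
  have hmk : (m : ℝ) = (k : ℝ) - 1 := by
    have : ((k - 1 : ℕ) : ℝ) = (k:ℝ) - 1 := by
      rw [Nat.cast_sub (by omega)]; norm_num
    simpa [hmdef] using this
  set α : ℝ := (r2 - r1).re - 1 - ε with hα
  have hre : r1.re + r2.re + 2 * d.re + 2 = (k : ℝ) := by
    have := congrArg Complex.re hsum
    simpa [Complex.add_re, Complex.mul_re] using this
  have hsubre : (r2 - r1).re = r2.re - r1.re := Complex.sub_re r2 r1
  have hαlow : -(1/2 : ℝ) < α := by rw [hα, hsubre]; linarith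
  have hαhigh : α ≤ (m : ℝ) := by rw [hα, hsubre, hmk]; linarith
  obtain ⟨S, hS0, hSb⟩ := BesselAux.small m
  obtain ⟨M, hM0, hMb⟩ := BesselAux.large m hm2
  refine ⟨S + M, by linarith, fun x hx => ?_⟩
  rw [BesselAux.besselJ_eq]
  have hxα : (0:ℝ) < x ^ α := Real.rpow_pos_of_pos hx α
  rcases le_or_gt x 1 with hx1 | hx1
  · have h1 := hSb x hx hx1
    have h2 : x ^ m ≤ x ^ α := by
      rw [← Real.rpow_natCast x m]
      exact Real.rpow_le_rpow_of_exponent_ge hx hx1 hαhigh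
    calc |BesselAux.J m x| ≤ S * x ^ m := h1
      _ ≤ S * x ^ α := by nlinarith
      _ ≤ (S + M) * x ^ α := by nlinarith
  · have h1 := hMb x hx1.le
    have h2 : M / Real.sqrt x = M * x ^ (-(1/2) : ℝ) := by
      rw [Real.sqrt_eq_rpow, Real.rpow_neg hx.le, div_eq_mul_inv]
    have h3 : x ^ (-(1/2) : ℝ) ≤ x ^ α :=
      Real.rpow_le_rpow_of_exponent_le hx1.le hαlow.le
    calc |BesselAux.J m x| ≤ M / Real.sqrt x := h1
      _ = M * x ^ (-(1/2):ℝ) := h2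
      _ ≤ M * x ^ α := by nlinarith
      _ ≤ (S + M) * x ^ α := by nlinarith

end
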